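/- Let {S_i}_{i=1}^N : C → C be nonexpansive mappings with F = ∩_{i=1}^N F(S_i) nonempty, and let {α_n} ⊂ [0,1] satisfy limsup_{n→∞} α_n < 1. Then the sequence {x_n} generated by: x_0 ∈ H; z_n = P_C x_n; y_n^i = α_n z_n + (1-α_n) S_i z_n (i = 1,…,N); i_n attaining max{‖y_n^i - x_n‖ : i = 1,…,N} and ȳ_n = y_n^{i_n}; C_n = {v ∈ H : ‖v - ȳ_n‖ ≤ ‖v - x_n‖}; Q_n = {v ∈ H : ⟨x_0 - x_n, x_n - v⟩ ≥ 0}; x_{n+1} = P_{C_n ∩ Q_n} x_0, converges strongly to P_F x_0. -/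

import Mathlib

open Filter Topology
open scoped RealInnerProductSpace

/-- `p` is the metric projection of `x` onto the set `D`:
it belongs to `D` and minimizes the distance to `x` over `D`. -/
def IsMetricProj {H : Type*} [NormedAddCommGroup H] [InnerProductSpace ℝ H]
    (D : Set H) (x p : H) : Prop :=
  p ∈ D ∧ ∀ w ∈ D, ‖p - x‖ ≤ ‖w - x‖

section Helpers

variable {H : Type*} [NormedAddCommGroup H] [InnerProductSpace ℝ H]

lemma sq_le_to_le {a b : ℝ} (ha : 0 ≤ a) (hb : 0 ≤ b) (h : a^2 ≤ b^2) : a ≤ b := by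
  nlinarith

lemma norm_sub_expand (u v q : H) :
    ‖u - v‖^2 = ‖u - q‖^2 + 2*⟪u - q, q - v⟫ + ‖q - v‖^2 := by
  have h : u - v = (u - q) + (q - v) := by abel
  rw [h, norm_add_sq_real]

lemma proj_inner_le {D : Set H} (hD : Convex ℝ D) {x0 q : H}
    (h : IsMetricProj D x0 q) {w : H} (hw : w ∈ D) : ⟪x0 - q, w - q⟫ ≤ 0 := by
  by_contra hc
  push_neg at hc
  set c := ⟪x0 - q, w - q⟫ with hcdef
  set K := ‖w - q‖^2 with hK
  have hK0 : 0 < K := by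
    rcases eq_or_ne w q with rfl | hne
    · simp [hcdef, sub_self] at hc
    · have h0 : w - q ≠ 0 := sub_ne_zero.2 hne
      have : 0 < ‖w - q‖ := norm_pos_iff.2 h0
      positivity
  set t := min 1 (c / K) with ht
  have ht0 : 0 < t := lt_min one_pos (div_pos hc hK0)
  have ht1 : t ≤ 1 := min_le_left _ _
  have hmem : q + t • (w - q) ∈ D := by
    have h2 := hD h.1 hw (by linarith : (0:ℝ) ≤ 1 - t) (le_of_lt ht0) (by ring)
    have e : (1 - t) • q + t • w = q + t • (w - q) := by module
    rwa [e] at h2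
  have h2 := h.2 _ hmem
  have hsq : ‖q - x0‖^2 ≤ ‖q + t • (w - q) - x0‖^2 :=
    pow_le_pow_left₀ (norm_nonneg _) h2 2
  have hexp : ‖q + t • (w - q) - x0‖^2 = ‖q - x0‖^2 - 2*(t*c) + t^2*K := by
    have e : q + t • (w - q) - x0 = (q - x0) + t • (w - q) := by abel
    rw [e, norm_add_sq_real, real_inner_smul_right, norm_smul, Real.norm_eq_abs,
      abs_of_pos ht0]
    have e2 : ⟪q - x0, w - q⟫ = -c := by
      rw [hcdef, show q - x0 = -(x0 - q) by abel, inner_neg_left]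
    rw [e2, mul_pow, hK]; ring
  have h3 : 2*c ≤ t*K := by nlinarith
  have h4 : t*K ≤ c := by
    have : t ≤ c / K := min_le_right _ _
    calc t*K ≤ (c/K)*K := by nlinarith
      _ = c := by field_simp
  linarith

lemma proj_dist_le {D : Set H} (hD : Convex ℝ D) {x0 q : H}
    (h : IsMetricProj D x0 q) {u : H} (hu : u ∈ D) : ‖u - q‖ ≤ ‖u - x0‖ := by
  have h1 := proj_inner_le hD h hu
  have e := norm_sub_expand u x0 q
  have e2 : ⟪u - q, q - x0⟫ = -⟪x0 - q, u - q⟫ := by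
    rw [show q - x0 = -(x0 - q) by abel, inner_neg_right, real_inner_comm]
  refine sq_le_to_le (norm_nonneg _) (norm_nonneg _) ?_
  nlinarith [sq_nonneg ‖q - x0‖]

lemma ultra_lim_exists (U : Ultrafilter ℕ) (g : ℕ → ℝ) {M : ℝ} (hb : ∀ n, |g n| ≤ M) :
    ∃ l, Tendsto g (U : Filter ℕ) (𝓝 l) := by
  have hle : (↑(U.map g) : Filter ℝ) ≤ 𝓟 (Set.Icc (-M) M) := by
    rw [Ultrafilter.coe_map, Filter.le_principal_iff, Filter.mem_map]
    exact Filter.univ_mem' (fun n => abs_le.mp (hb n))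
  obtain ⟨l, _, hl⟩ := isCompact_Icc.ultrafilter_le_nhds (U.map g) hle
  rw [Ultrafilter.coe_map] at hl
  exact ⟨l, hl⟩

lemma exists_weak_lim [CompleteSpace H] (U : Ultrafilter ℕ) (z : ℕ → H) {M : ℝ}
    (hb : ∀ n, ‖z n‖ ≤ M) :
    ∃ w : H, ∀ u : H, Tendsto (fun n => ⟪z n, u⟫) (U : Filter ℕ) (𝓝 ⟪w, u⟫) := by
  have key : ∀ u : H, ∃ l, Tendsto (fun n => ⟪z n, u⟫) (U : Filter ℕ) (𝓝 l) := fun u =>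
    ultra_lim_exists U _ (M := M * ‖u‖) (fun n =>
      (abs_real_inner_le_norm _ _).trans (mul_le_mul_of_nonneg_right (hb n) (norm_nonneg u)))
  choose φ hφ using key
  have hadd : ∀ u v, φ (u + v) = φ u + φ v := fun u v => by
    refine tendsto_nhds_unique (hφ (u + v)) ?_
    have h := (hφ u).add (hφ v)
    simpa [inner_add_right] using h
  have hsmul : ∀ (c : ℝ) (u : H), φ (c • u) = c * φ u := fun c u => by
    refine tendsto_nhds_unique (hφ (c • u)) ?_
    have h := (hφ u).const_mul c
    simpa [inner_smul_right] using h
  have hbound : ∀ u, |φ u| ≤ M * ‖u‖ := fun u =>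
    le_of_tendsto (hφ u).abs (Filter.Eventually.of_forall fun n =>
      (abs_real_inner_le_norm _ _).trans (mul_le_mul_of_nonneg_right (hb n) (norm_nonneg u)))
  let L : H →ₗ[ℝ] ℝ :=
    { toFun := φ, map_add' := hadd, map_smul' := hsmul }
  let Lc : H →L[ℝ] ℝ := L.mkContinuous M (fun u => by
    simpa [Real.norm_eq_abs, L] using hbound u)
  refine ⟨(InnerProductSpace.toDual ℝ H).symm Lc, fun u => ?_⟩
  have e : ⟪(InnerProductSpace.toDual ℝ H).symm Lc, u⟫ = Lc u :=
    InnerProductSpace.toDual_symm_apply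
  rw [e]
  exact hφ u

lemma tendsto_of_sq_tendsto_zero {l : Filter ℕ} {f : ℕ → ℝ} (hf : ∀ n, 0 ≤ f n)
    (h : Tendsto (fun n => f n ^ 2) l (𝓝 0)) : Tendsto f l (𝓝 0) := by
  have h2 := (Real.continuous_sqrt.tendsto 0).comp h
  rw [Real.sqrt_zero] at h2
  have e : Real.sqrt ∘ (fun n => f n ^ 2) = f := funext fun n => Real.sqrt_sq (hf n)
  rwa [e] at h2

end Helpers

theorem parallel_hybrid_fixed_point_convergence
    {H : Type*} [NormedAddCommGroup H] [InnerProductSpace ℝ H] [CompleteSpace H]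
    -- `C` is a nonempty closed convex subset of `H`
    (C : Set H) (hCne : C.Nonempty) (hCcl : IsClosed C) (hCcv : Convex ℝ C)
    (N : ℕ)
    -- the mappings `S_i : C → C` are nonexpansive
    (S : Fin N → H → H) (hSmap : ∀ i, ∀ p ∈ C, S i p ∈ C)
    (hS : ∀ i, ∀ p ∈ C, ∀ q ∈ C, ‖S i p - S i q‖ ≤ ‖p - q‖)
    -- `{α_n} ⊂ [0,1]` with `limsup α_n < 1`
    (a : ℕ → ℝ) (ha : ∀ n, a n ∈ Set.Icc (0 : ℝ) 1)
    (ha' : Filter.limsup a Filter.atTop < 1)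
    -- `F = ∩ F(S_i)` is nonempty
    (F : Set H) (hF : F = {p | p ∈ C ∧ ∀ i, S i p = p}) (hFne : F.Nonempty)
    -- the algorithm
    (x : ℕ → H) (z : ℕ → H) (y : ℕ → Fin N → H) (inn : ℕ → Fin N)
    (Cn Qn : ℕ → Set H)
    -- `z_n = P_C x_n`
    (hz : ∀ n, IsMetricProj C (x n) (z n))
    -- `y_n^i = α_n z_n + (1 - α_n) S_i z_n`
    (hy : ∀ n i, y n i = a n • z n + (1 - a n) • S i (z n))
    -- `i_n` attains `max{‖y_n^i - x_n‖}`, `ȳ_n = y_n^{i_n}`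
    (hin : ∀ n i, ‖y n i - x n‖ ≤ ‖y n (inn n) - x n‖)
    -- `C_n = {v : ‖v - ȳ_n‖ ≤ ‖v - x_n‖}`
    (hCn : ∀ n, Cn n = {v | ‖v - y n (inn n)‖ ≤ ‖v - x n‖})
    -- `Q_n = {v : ⟨x_0 - x_n, x_n - v⟩ ≥ 0}`
    (hQn : ∀ n, Qn n = {v | 0 ≤ ⟪x 0 - x n, x n - v⟫})
    -- `x_{n+1} = P_{C_n ∩ Q_n} x_0`
    (hx : ∀ n, IsMetricProj (Cn n ∩ Qn n) (x 0) (x (n + 1)))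
    -- `P_F x_0`
    (p : H) (hp : IsMetricProj F (x 0) p) :
    Filter.Tendsto x Filter.atTop (nhds p) := by
  have hpF : p ∈ F := hp.1
  have hFC : F ⊆ C := by rw [hF]; intro u hu; exact hu.1
  have hpC : p ∈ C := hFC hpF
  have hznC : ∀ n, z n ∈ C := fun n => (hz n).1
  have hyC : ∀ n i, y n i ∈ C := fun n i => by
    rw [hy]
    exact hCcv (hznC n) (hSmap i _ (hznC n)) (ha n).1 (by linarith [(ha n).2]) (by ring)
  -- convexity of the half-spaces
  have hCncv : ∀ n, Convex ℝ (Cn n) := by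
    intro n
    rw [hCn]
    have hlin : IsLinearMap ℝ (fun v : H => ⟪v, x n - y n (inn n)⟫) :=
      ⟨fun u v => inner_add_left _ _ _, fun c u => real_inner_smul_left _ _ _⟩
    have e : {v : H | ‖v - y n (inn n)‖ ≤ ‖v - x n‖}
        = {v : H | ⟪v, x n - y n (inn n)⟫ ≤ (‖x n‖^2 - ‖y n (inn n)‖^2)/2} := by
      ext v
      simp only [Set.mem_setOf_eq]
      have e1 := norm_sub_sq_real v (y n (inn n))
      have e2 := norm_sub_sq_real v (x n)
      have e3 : ⟪v, x n - y n (inn n)⟫ = ⟪v, x n⟫ - ⟪v, y n (inn n)⟫ :=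
        inner_sub_right _ _ _
      constructor
      · intro h
        have h2 : ‖v - y n (inn n)‖^2 ≤ ‖v - x n‖^2 :=
          pow_le_pow_left₀ (norm_nonneg _) h 2
        linarith
      · intro h
        refine sq_le_to_le (norm_nonneg _) (norm_nonneg _) ?_
        linarith
    rw [e]
    exact convex_halfSpace_le hlin _
  have hQncv : ∀ n, Convex ℝ (Qn n) := by
    intro n
    rw [hQn]
    have hlin : IsLinearMap ℝ (fun v : H => ⟪x 0 - x n, v⟫) :=
      ⟨fun u v => inner_add_right _ _ _, fun c u => real_inner_smul_right _ _ _⟩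
    have e : {v : H | 0 ≤ ⟪x 0 - x n, x n - v⟫}
        = {v : H | ⟪x 0 - x n, v⟫ ≤ ⟪x 0 - x n, x n⟫} := by
      ext v
      simp only [Set.mem_setOf_eq, inner_sub_right]
      constructor <;> intro <;> linarith
    rw [e]
    exact convex_halfSpace_le hlin _
  have hxC : ∀ n, x (n+1) ∈ Cn n := fun n => (hx n).1.1
  have hxQ : ∀ n, x (n+1) ∈ Qn n := fun n => (hx n).1.2
  -- F ⊆ Cn
  have hFCn : ∀ n, F ⊆ Cn n := by
    intro n u hu
    rw [hCn]
    have huC : u ∈ C := hFC hu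
    have hfix : ∀ i, S i u = u := by rw [hF] at hu; exact hu.2
    have h1 : ‖u - y n (inn n)‖ ≤ ‖u - z n‖ := by
      rw [hy]
      have e : u - (a n • z n + (1 - a n) • S (inn n) (z n))
          = a n • (u - z n) + (1 - a n) • (u - S (inn n) (z n)) := by module
      rw [e]
      have hSn : ‖u - S (inn n) (z n)‖ ≤ ‖u - z n‖ := by
        have h2 := hS (inn n) u huC (z n) (hznC n)
        rwa [hfix (inn n)] at h2
      calc ‖a n • (u - z n) + (1 - a n) • (u - S (inn n) (z n))‖
          ≤ ‖a n • (u - z n)‖ + ‖(1 - a n) • (u - S (inn n) (z n))‖ := norm_add_le _ _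
        _ = a n * ‖u - z n‖ + (1 - a n) * ‖u - S (inn n) (z n)‖ := by
            rw [norm_smul, norm_smul, Real.norm_eq_abs, Real.norm_eq_abs,
              abs_of_nonneg (ha n).1, abs_of_nonneg (by linarith [(ha n).2])]
        _ ≤ a n * ‖u - z n‖ + (1 - a n) * ‖u - z n‖ := by
            have h4 : (0:ℝ) ≤ 1 - a n := by linarith [(ha n).2]
            nlinarith
        _ = ‖u - z n‖ := by ring
    have h2 : ‖u - z n‖ ≤ ‖u - x n‖ := proj_dist_le hCcv (hz n) huC
    exact h1.trans h2
  -- F ⊆ Qn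
  have hFQn : ∀ n, F ⊆ Qn n := by
    intro n
    induction n with
    | zero =>
      intro u _
      rw [hQn]
      simp
    | succ n ih =>
      intro u hu
      rw [hQn]
      have huCQ : u ∈ Cn n ∩ Qn n := ⟨hFCn n hu, ih hu⟩
      have h1 := proj_inner_le ((hCncv n).inter (hQncv n)) (hx n) huCQ
      have h2 : ⟪x 0 - x (n+1), x (n+1) - u⟫ = -⟪x 0 - x (n+1), u - x (n+1)⟫ := by
        rw [show x (n+1) - u = -(u - x (n+1)) by abel, inner_neg_right]
      show (0:ℝ) ≤ ⟪x 0 - x (n+1), x (n+1) - u⟫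
      rw [h2]
      linarith
  -- key quadratic estimate on Qn
  have hQkey : ∀ n, ∀ v ∈ Qn n, ‖v - x n‖^2 + ‖x n - x 0‖^2 ≤ ‖v - x 0‖^2 := by
    intro n v hv
    rw [hQn] at hv
    have hv' : (0:ℝ) ≤ ⟪x 0 - x n, x n - v⟫ := hv
    have e := norm_sub_expand v (x 0) (x n)
    have e2 : ⟪v - x n, x n - x 0⟫ = ⟪x 0 - x n, x n - v⟫ := by
      rw [show v - x n = -(x n - v) by abel, show x n - x 0 = -(x 0 - x n) by abel,
        inner_neg_neg, real_inner_comm]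
    linarith
  set R := ‖p - x 0‖ with hR
  set rr : ℕ → ℝ := fun n => ‖x n - x 0‖ with hrr
  have hrmono : Monotone rr := by
    apply monotone_nat_of_le_succ
    intro n
    have h1 := hQkey n (x (n+1)) (hxQ n)
    refine sq_le_to_le (norm_nonneg _) (norm_nonneg _) ?_
    have := sq_nonneg ‖x (n+1) - x n‖
    simp only [hrr]
    linarith
  have hrR : ∀ n, rr n ≤ R := by
    intro n
    cases n with
    | zero => simp [hrr, hR]
    | succ n => exact (hx n).2 p ⟨hFCn n hpF, hFQn n hpF⟩
  have hbdd : BddAbove (Set.range rr) := ⟨R, by rintro _ ⟨n, rfl⟩; exact hrR n⟩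
  have hrlim : Tendsto rr atTop (𝓝 (⨆ n, rr n)) := tendsto_atTop_ciSup hrmono hbdd
  set r := ⨆ n, rr n with hrdef
  have hrle : r ≤ R := ciSup_le hrR
  have hr0 : 0 ≤ r := by
    have h1 := le_ciSup hbdd 0
    simpa [hrr] using h1
  -- successive differences tend to zero
  have hdiff : Tendsto (fun n => ‖x (n+1) - x n‖) atTop (𝓝 0) := by
    have hsq : ∀ n, ‖x (n+1) - x n‖^2 ≤ rr (n+1)^2 - rr n^2 := by
      intro n
      have := hQkey n (x (n+1)) (hxQ n)
      simp only [hrr]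
      linarith
    have h2 : Tendsto (fun n => rr n ^ 2) atTop (𝓝 (r^2)) := hrlim.pow 2
    have h3 : Tendsto (fun n => rr (n+1) ^ 2) atTop (𝓝 (r^2)) :=
      h2.comp (tendsto_add_atTop_nat 1)
    have h1 : Tendsto (fun n => rr (n+1)^2 - rr n^2) atTop (𝓝 0) := by
      simpa using h3.sub h2
    exact tendsto_of_sq_tendsto_zero (fun n => norm_nonneg _)
      (squeeze_zero (fun n => sq_nonneg _) hsq h1)
  -- ‖ȳ_n - x_n‖ → 0
  have hybar : Tendsto (fun n => ‖y n (inn n) - x n‖) atTop (𝓝 0) := by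
    have hb : ∀ n, ‖y n (inn n) - x n‖ ≤ 2 * ‖x (n+1) - x n‖ := by
      intro n
      have h1 : ‖x (n+1) - y n (inn n)‖ ≤ ‖x (n+1) - x n‖ := by
        have h2 := hxC n
        rw [hCn] at h2
        exact h2
      have h3 : ‖y n (inn n) - x n‖ ≤ ‖y n (inn n) - x (n+1)‖ + ‖x (n+1) - x n‖ :=
        norm_sub_le_norm_sub_add_norm_sub _ _ _
      rw [norm_sub_rev (y n (inn n)) (x (n+1))] at h3
      linarith
    have h4 : Tendsto (fun n => 2 * ‖x (n+1) - x n‖) atTop (𝓝 0) := by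
      simpa using hdiff.const_mul 2
    exact squeeze_zero (fun n => norm_nonneg _) hb h4
  -- ‖z_n - x_n‖ → 0
  have hzx : Tendsto (fun n => ‖z n - x n‖) atTop (𝓝 0) :=
    squeeze_zero (fun n => norm_nonneg _) (fun n => (hz n).2 _ (hyC n (inn n))) hybar
  -- ‖z_n - x_0‖ → r
  have hzx0 : Tendsto (fun n => ‖z n - x 0‖) atTop (𝓝 r) := by
    have h1 : Tendsto (fun n => ‖z n - x 0‖ - rr n) atTop (𝓝 0) := by
      refine squeeze_zero_norm (fun n => ?_) hzx
      have h2 := abs_norm_sub_norm_le (z n - x 0) (x n - x 0)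
      simpa [hrr, show z n - x 0 - (x n - x 0) = z n - x n by abel] using h2
    simpa using h1.add hrlim
  -- ‖S_i z_n - z_n‖ → 0
  have hSz : ∀ i, Tendsto (fun n => ‖S i (z n) - z n‖) atTop (𝓝 0) := by
    intro i
    obtain ⟨c, hc1, hc2⟩ : ∃ c : ℝ, c < 1 ∧ ∀ᶠ n in atTop, a n < c := by
      refine ⟨(limsup a atTop + 1)/2, by linarith, ?_⟩
      exact eventually_lt_of_limsup_lt (by linarith) (isBoundedUnder_of ⟨1, fun n => (ha n).2⟩)
    set δ := 1 - c with hδ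
    have hδ0 : 0 < δ := by linarith
    have hkey : ∀ n, (1 - a n) * ‖S i (z n) - z n‖ ≤ ‖y n (inn n) - x n‖ + ‖z n - x n‖ := by
      intro n
      have e : y n i - z n = (1 - a n) • (S i (z n) - z n) := by rw [hy]; module
      have e2 : ‖y n i - z n‖ = (1 - a n) * ‖S i (z n) - z n‖ := by
        rw [e, norm_smul, Real.norm_eq_abs, abs_of_nonneg (by linarith [(ha n).2])]
      have h3 : ‖y n i - z n‖ ≤ ‖y n i - x n‖ + ‖x n - z n‖ :=
        norm_sub_le_norm_sub_add_norm_sub _ _ _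
      rw [norm_sub_rev (x n) (z n)] at h3
      have h4 := hin n i
      rw [e2] at h3
      linarith
    apply squeeze_zero' (Filter.Eventually.of_forall fun n => norm_nonneg _)
      (g := fun n => δ⁻¹ * (‖y n (inn n) - x n‖ + ‖z n - x n‖))
    · filter_upwards [hc2] with n hn
      have h5 : δ ≤ 1 - a n := by simp only [hδ]; linarith
      have h6 := hkey n
      have h7 : δ * ‖S i (z n) - z n‖ ≤ (1 - a n) * ‖S i (z n) - z n‖ :=
        mul_le_mul_of_nonneg_right h5 (norm_nonneg _)
      have h8 : δ * ‖S i (z n) - z n‖ ≤ ‖y n (inn n) - x n‖ + ‖z n - x n‖ := le_trans h7 h6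
      calc ‖S i (z n) - z n‖ = δ⁻¹ * (δ * ‖S i (z n) - z n‖) := by
            field_simp
        _ ≤ δ⁻¹ * (‖y n (inn n) - x n‖ + ‖z n - x n‖) :=
            mul_le_mul_of_nonneg_left h8 (inv_nonneg.2 hδ0.le)
    · simpa using (hybar.add hzx).const_mul δ⁻¹
  -- boundedness of z
  set M := 3 * R + ‖x 0‖ with hM
  have hzbdd : ∀ n, ‖z n‖ ≤ M := by
    intro n
    have h1 : ‖z n - x n‖ ≤ ‖p - x n‖ := (hz n).2 p hpC
    have h2 : ‖p - x n‖ ≤ ‖p - x 0‖ + ‖x 0 - x n‖ := norm_sub_le_norm_sub_add_norm_sub _ _ _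
    have h3 : ‖x 0 - x n‖ = rr n := by rw [hrr, norm_sub_rev]
    have h4 := hrR n
    have h5 : ‖z n‖ ≤ ‖z n - x n‖ + ‖x n - x 0‖ + ‖x 0‖ := by
      calc ‖z n‖ = ‖(z n - x n) + (x n - x 0) + x 0‖ := by congr 1; abel
        _ ≤ ‖(z n - x n) + (x n - x 0)‖ + ‖x 0‖ := norm_add_le _ _
        _ ≤ ‖z n - x n‖ + ‖x n - x 0‖ + ‖x 0‖ := by
            linarith [norm_add_le (z n - x n) (x n - x 0)]
    simp only [hM, hR]
    rw [h3] at h2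
    have h6 : rr n = ‖x n - x 0‖ := rfl
    rw [h6] at h4
    linarith
  -- the weak limit
  set U := Ultrafilter.of (atTop : Filter ℕ) with hUdef
  have hUle : (U : Filter ℕ) ≤ atTop := Ultrafilter.of_le _
  obtain ⟨w, hw⟩ := exists_weak_lim U z hzbdd
  -- w ∈ C
  have hwC : w ∈ C := by
    obtain ⟨q, hqC, hq⟩ := exists_norm_eq_iInf_of_complete_convex hCne hCcl.isComplete hCcv w
    have hproj : IsMetricProj C w q := by
      refine ⟨hqC, fun v hv => ?_⟩
      rw [norm_sub_rev q w, hq]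
      rw [norm_sub_rev v w]
      exact ciInf_le ⟨0, by rintro _ ⟨j, rfl⟩; exact norm_nonneg _⟩ (⟨v, hv⟩ : C)
    have hvar : ∀ n, ⟪w - q, z n - q⟫ ≤ 0 := fun n => proj_inner_le hCcv hproj (hznC n)
    have hlim : Tendsto (fun n => ⟪w - q, z n - q⟫) (U : Filter ℕ) (𝓝 ⟪w - q, w - q⟫) := by
      have h1 := (hw (w - q)).sub (tendsto_const_nhds (x := ⟪q, w - q⟫))
      have e : (fun n => ⟪z n, w - q⟫ - ⟪q, w - q⟫) = fun n => ⟪w - q, z n - q⟫ := by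
        funext n
        rw [real_inner_comm (z n - q) (w - q), inner_sub_left]
      rw [e] at h1
      have e2 : ⟪w, w - q⟫ - ⟪q, w - q⟫ = ⟪w - q, w - q⟫ := by
        rw [inner_sub_left]
      rwa [e2] at h1
    have h2 : ⟪w - q, w - q⟫ ≤ 0 := le_of_tendsto hlim (Filter.Eventually.of_forall hvar)
    have h3 : w - q = 0 := real_inner_self_nonpos.mp h2
    have h4 : w = q := by rwa [sub_eq_zero] at h3
    rw [h4]; exact hqC
  -- w ∈ F
  have hwF : w ∈ F := by
    rw [hF]
    refine ⟨hwC, fun i => ?_⟩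
    obtain ⟨L, hL⟩ := ultra_lim_exists U (fun n => ‖z n - w‖^2) (M := (M + ‖w‖)^2)
      (fun n => by
        rw [abs_of_nonneg (sq_nonneg _)]
        have h1 : ‖z n - w‖ ≤ M + ‖w‖ := (norm_sub_le _ _).trans (by linarith [hzbdd n])
        exact pow_le_pow_left₀ (norm_nonneg _) h1 2)
    have hL0 : 0 ≤ L := ge_of_tendsto hL (Filter.Eventually.of_forall fun n => sq_nonneg _)
    have hSi : Tendsto (fun n => ‖S i (z n) - z n‖) (U : Filter ℕ) (𝓝 0) :=
      (hSz i).mono_left hUle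
    have hzw : Tendsto (fun n => ‖z n - w‖) (U : Filter ℕ) (𝓝 (Real.sqrt L)) := by
      have h2 := (Real.continuous_sqrt.tendsto L).comp hL
      have e : Real.sqrt ∘ (fun n => ‖z n - w‖^2) = fun n => ‖z n - w‖ :=
        funext fun n => Real.sqrt_sq (norm_nonneg _)
      rwa [e] at h2
    -- upper bound
    have hub : ∀ n, ‖z n - S i w‖^2 ≤ (‖S i (z n) - z n‖ + ‖z n - w‖)^2 := by
      intro n
      have h1 : ‖z n - S i w‖ ≤ ‖z n - S i (z n)‖ + ‖S i (z n) - S i w‖ :=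
        norm_sub_le_norm_sub_add_norm_sub _ _ _
      have h2 : ‖S i (z n) - S i w‖ ≤ ‖z n - w‖ := hS i (z n) (hznC n) w hwC
      have h3 : ‖z n - S i (z n)‖ = ‖S i (z n) - z n‖ := norm_sub_rev _ _
      rw [h3] at h1
      have h4 : ‖z n - S i w‖ ≤ ‖S i (z n) - z n‖ + ‖z n - w‖ := by linarith
      exact pow_le_pow_left₀ (norm_nonneg _) h4 2
    have hRHS : Tendsto (fun n => (‖S i (z n) - z n‖ + ‖z n - w‖)^2) (U : Filter ℕ)
        (𝓝 L) := by
      have h1 := (hSi.add hzw).pow 2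
      rwa [zero_add, Real.sq_sqrt hL0] at h1
    have hLHS : Tendsto (fun n => ‖z n - S i w‖^2) (U : Filter ℕ)
        (𝓝 (L + 2 * 0 + ‖w - S i w‖^2)) := by
      have hinner : Tendsto (fun n => ⟪z n - w, w - S i w⟫) (U : Filter ℕ) (𝓝 0) := by
        have h1 := (hw (w - S i w)).sub (tendsto_const_nhds (x := ⟪w, w - S i w⟫))
        have e : (fun n => ⟪z n, w - S i w⟫ - ⟪w, w - S i w⟫)
            = fun n => ⟪z n - w, w - S i w⟫ := by
          funext n; rw [inner_sub_left]
        rw [e] at h1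
        simpa using h1
      have h2 := (hL.add (hinner.const_mul 2)).add
        (tendsto_const_nhds (x := ‖w - S i w‖^2))
      have e : (fun n => ‖z n - w‖^2 + 2 * ⟪z n - w, w - S i w⟫ + ‖w - S i w‖^2)
          = fun n => ‖z n - S i w‖^2 := by
        funext n
        rw [← norm_sub_expand (z n) (S i w) w]
      rw [← e]
      exact h2
    have h5 : L + 2 * 0 + ‖w - S i w‖^2 ≤ L :=
      le_of_tendsto_of_tendsto' hLHS hRHS hub
    have h6 : ‖w - S i w‖ = 0 := by nlinarith [sq_nonneg ‖w - S i w‖, norm_nonneg (w - S i w)]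
    have h7 : w - S i w = 0 := norm_eq_zero.mp h6
    have h8 : w = S i w := by rwa [sub_eq_zero] at h7
    exact h8.symm
  -- R ≤ r
  have hRler : R ≤ r := by
    have hwx0 : ‖w - x 0‖ ≤ r := by
      have h1 : Tendsto (fun n => ⟪z n - x 0, w - x 0⟫) (U : Filter ℕ)
          (𝓝 (‖w - x 0‖^2)) := by
        have h2 := (hw (w - x 0)).sub (tendsto_const_nhds (x := ⟪x 0, w - x 0⟫))
        have e : (fun n => ⟪z n, w - x 0⟫ - ⟪x 0, w - x 0⟫)
            = fun n => ⟪z n - x 0, w - x 0⟫ := by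
          funext n; rw [inner_sub_left]
        rw [e] at h2
        have e2 : ⟪w, w - x 0⟫ - ⟪x 0, w - x 0⟫ = ‖w - x 0‖^2 := by
          rw [← inner_sub_left, real_inner_self_eq_norm_sq]
        rwa [e2] at h2
      have h3 : Tendsto (fun n => ‖z n - x 0‖ * ‖w - x 0‖) (U : Filter ℕ)
          (𝓝 (r * ‖w - x 0‖)) := (hzx0.mono_left hUle).mul_const _
      have h4 : ‖w - x 0‖^2 ≤ r * ‖w - x 0‖ :=
        le_of_tendsto_of_tendsto' h1 h3 (fun n => real_inner_le_norm _ _)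
      rcases (norm_nonneg (w - x 0)).eq_or_lt.imp Eq.symm id with h5 | h5
      · rw [h5]; exact hr0
      · have := le_of_mul_le_mul_right (by nlinarith : ‖w - x 0‖ * ‖w - x 0‖ ≤ r * ‖w - x 0‖) h5
        exact this
    exact le_trans (hp.2 w hwF) hwx0
  have hrR' : r = R := le_antisymm hrle hRler
  -- conclude
  have hfin : ∀ n, ‖x n - p‖^2 ≤ R^2 - rr n^2 := by
    intro n
    have h1 := hQkey n p (hFQn n hpF)
    have h2 : ‖x n - p‖ = ‖p - x n‖ := norm_sub_rev _ _
    simp only [hrr, hR]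
    rw [h2]
    linarith
  have hlim2 : Tendsto (fun n => R^2 - rr n^2) atTop (𝓝 0) := by
    have h1 : Tendsto (fun n => rr n ^ 2) atTop (𝓝 (r^2)) := hrlim.pow 2
    rw [hrR'] at h1
    have h2 := (tendsto_const_nhds (x := R^2)).sub h1
    rw [sub_self] at h2
    exact h2
  have hsq2 : Tendsto (fun n => ‖x n - p‖^2) atTop (𝓝 0) :=
    squeeze_zero (fun n => sq_nonneg _) hfin hlim2
  have hnorm : Tendsto (fun n => ‖x n - p‖) atTop (𝓝 0) :=
    tendsto_of_sq_tendsto_zero (fun n => norm_nonneg _) hsq2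
  exact tendsto_iff_norm_sub_tendsto_zero.mpr hnorm
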